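/- In a Veldkamp n-gon, if (x_0,x_1,...,x_n) and (y_0,y_1,...,y_n) are two straight n-paths with x_0=y_0 and x_n=y_n, then x_1 and y_1 are opposite at x_0 if and only if x_{n-1} and y_{n-1} are opposite at x_n. -/
import Mathlib


/-- A Veldkamp graph: a graph endowed, at each vertex `v`, with a symmetric
anti-reflexive "local opposition" relation `opp v` on the neighborhood of `v`
that is 2-plump. -/
structure VeldkampGraph (V : Type*) where
  adj : V → V → Prop
  adj_symm : ∀ u v, adj u v → adj v u
  adj_irrefl : ∀ v, ¬ adj v v
  opp : V → V → V → Prop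
  opp_adj_left : ∀ v x y, opp v x y → adj v x
  opp_adj_right : ∀ v x y, opp v x y → adj v y
  opp_symm : ∀ v x y, opp v x y → opp v y x
  opp_irrefl : ∀ v x, ¬ opp v x x
  plump2 : ∀ v x y, adj v x → adj v y → ∃ z, adj v z ∧ opp v z x ∧ opp v z y

namespace VeldkampGraph

variable {V : Type*} (Γ : VeldkampGraph V)

/-- `p 0, p 1, ..., p s` is an `s`-path. -/
def IsPath (s : ℕ) (p : ℕ → V) : Prop :=
  (∀ i, i < s → Γ.adj (p i) (p (i + 1))) ∧ ∀ i, i + 2 ≤ s → p i ≠ p (i + 2)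

/-- `p 0, ..., p s` is a straight `s`-path. -/
def IsStraight (s : ℕ) (p : ℕ → V) : Prop :=
  Γ.IsPath s p ∧ ∀ i, i + 2 ≤ s → Γ.opp (p (i + 1)) (p i) (p (i + 2))

/-- There is an `s`-path from `x` to `y`. -/
def HasPathLen (s : ℕ) (x y : V) : Prop :=
  ∃ p : ℕ → V, Γ.IsPath s p ∧ p 0 = x ∧ p s = y

/-- `dist (x, y) = k`. -/
def DistEq (x y : V) (k : ℕ) : Prop :=
  Γ.HasPathLen k x y ∧ ∀ j < k, ¬ Γ.HasPathLen j x y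

def Connected : Prop := ∀ x y : V, ∃ s, Γ.HasPathLen s x y

def Bipartite : Prop := ∃ P : Set V, ∀ u v, Γ.adj u v → (u ∈ P ↔ v ∉ P)

/-- A straight `m`-circuit, encoded as an `m`-periodic straight closed walk. -/
def IsClosedStraight (m : ℕ) (q : ℕ → V) : Prop :=
  (∀ i, Γ.adj (q i) (q (i + 1))) ∧ (∀ i, Γ.opp (q (i + 1)) (q i) (q (i + 2))) ∧
    ∀ i, q (i + m) = q i

/-- An `m`-circuit: an `m`-periodic closed walk through `m` distinct vertices. -/
def IsCircuit (m : ℕ) (q : ℕ → V) : Prop :=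
  (∀ i, Γ.adj (q i) (q (i + 1))) ∧ (∀ i, q (i + m) = q i) ∧
    ∀ i j, i < m → j < m → q i = q j → i = j

end VeldkampGraph

/-- A Veldkamp `n`-gon. -/
structure VeldkampNGon (V : Type*) (n : ℕ) extends VeldkampGraph V where
  two_le : 2 ≤ n
  connected : toVeldkampGraph.Connected
  bipartite : toVeldkampGraph.Bipartite
  vp2 : ∀ k, 1 ≤ k → k ≤ n - 1 → ∀ p j q, toVeldkampGraph.IsStraight k p →
    j ≤ k → toVeldkampGraph.IsStraight j q → q 0 = p 0 → q j = p k →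
    j = k ∧ ∀ i ≤ k, q i = p i
  vp3 : ∀ p, toVeldkampGraph.IsStraight (n + 1) p →
    ∃ q, toVeldkampGraph.IsClosedStraight (2 * n) q ∧ ∀ i ≤ n + 1, q i = p i

namespace VeldkampNGon

variable {V : Type*} {n : ℕ} (Γ : VeldkampNGon V n)

/-- Two vertices are opposite if there is a root (straight `n`-path) from one
to the other. -/
def Opp (x y : V) : Prop :=
  ∃ p, Γ.IsStraight n p ∧ p 0 = x ∧ p n = y

/-- The set of vertices opposite `x`. -/
def opSet (x : V) : Set V := {y | Γ.Opp x y}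

/-- Two edges are opposite if some straight `(n+1)`-path has them as its first
and last edges. -/
def EdgeOpp (e f : Sym2 V) : Prop :=
  ∃ p, Γ.IsStraight (n + 1) p ∧ s(p 0, p 1) = e ∧ s(p n, p (n + 1)) = f

end VeldkampNGon

lemma straight_mono {V : Type*} (Γ : VeldkampGraph V) {s j : ℕ} {p : ℕ → V}
    (h : Γ.IsStraight s p) (hj : j ≤ s) : Γ.IsStraight j p :=
  ⟨⟨fun i hi => h.1.1 i (lt_of_lt_of_le hi hj), fun i hi => h.1.2 i (hi.trans hj)⟩,
    fun i hi => h.2 i (hi.trans hj)⟩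

lemma straight_rev {V : Type*} (Γ : VeldkampGraph V) {s : ℕ} {p : ℕ → V}
    (h : Γ.IsStraight s p) : Γ.IsStraight s (fun i => p (s - i)) := by
  obtain ⟨⟨hadj, hne⟩, hopp⟩ := h
  refine ⟨⟨?_, ?_⟩, ?_⟩
  · intro i hi
    show Γ.adj (p (s - i)) (p (s - (i + 1)))
    have h1 : s - i = (s - (i + 1)) + 1 := by omega
    rw [h1]
    exact Γ.adj_symm _ _ (hadj (s - (i + 1)) (by omega))
  · intro i hi
    show p (s - i) ≠ p (s - (i + 2))
    have h1 : s - i = (s - (i + 2)) + 2 := by omega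
    rw [h1]
    exact (hne (s - (i + 2)) (by omega)).symm
  · intro i hi
    show Γ.opp (p (s - (i + 1))) (p (s - i)) (p (s - (i + 2)))
    have h1 : s - i = (s - (i + 2)) + 2 := by omega
    have h2 : s - (i + 1) = (s - (i + 2)) + 1 := by omega
    rw [h1, h2]
    exact Γ.opp_symm _ _ _ (hopp (s - (i + 2)) (by omega))

lemma stmt4_aux {V : Type*} {n : ℕ} (Γ : VeldkampNGon V n) (p q : ℕ → V)
    (hp : Γ.IsStraight n p) (hq : Γ.IsStraight n q)
    (h0 : q 0 = p 0) (hn : q n = p n)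
    (h : Γ.opp (p 0) (p 1) (q 1)) : Γ.opp (p n) (p (n - 1)) (q (n - 1)) := by
  have hn2 : 2 ≤ n := Γ.two_le
  -- the straight (n+1)-path  q 1, p 0, p 1, ..., p n
  set r : ℕ → V := fun i => if i = 0 then q 1 else p (i - 1) with hr_def
  have hr0 : r 0 = q 1 := rfl
  have hrS : ∀ i, r (i + 1) = p i := fun i => by simp [hr_def]
  have hq1p1 : q 1 ≠ p 1 := by
    intro he
    exact Γ.opp_irrefl (p 0) (p 1) (by rw [he] at h; exact h)
  have hr : Γ.IsStraight (n + 1) r := by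
    refine ⟨⟨?_, ?_⟩, ?_⟩
    · intro i hi
      obtain _ | j := i
      · rw [hr0, hrS 0, ← h0]
        exact Γ.adj_symm _ _ (hq.1.1 0 (by omega))
      · rw [hrS, hrS]
        exact hp.1.1 j (by omega)
    · intro i hi
      obtain _ | j := i
      · rw [hr0, hrS 1]
        exact hq1p1
      · rw [hrS, hrS]
        exact hp.1.2 j (by omega)
    · intro i hi
      obtain _ | j := i
      · rw [hr0, hrS 0, hrS 1]
        exact Γ.opp_symm _ _ _ h
      · rw [hrS, hrS, hrS]
        exact hp.2 j (by omega)
  obtain ⟨c, hc, hcr⟩ := Γ.vp3 r hr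
  -- reversed q, as a straight (n-1)-path from p n to q 1
  set t : ℕ → V := fun i => q (n - i) with ht_def
  have ht : Γ.IsStraight (n - 1) t :=
    straight_mono _ (straight_rev Γ.toVeldkampGraph hq) (by omega)
  -- the tail of the closed circuit, from p n onwards
  set s : ℕ → V := fun i => c (n + 1 + i) with hs_def
  have hs : Γ.IsStraight (n - 1) s := by
    refine ⟨⟨?_, ?_⟩, ?_⟩
    · intro i _
      exact hc.1 (n + 1 + i)
    · intro i _ he
      have h2 := hc.2.1 (n + 1 + i)
      have he' : c (n + 1 + i) = c (n + 1 + i + 2) := he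
      rw [← he'] at h2
      exact Γ.opp_irrefl _ _ h2
    · intro i _
      exact hc.2.1 (n + 1 + i)
  have hcn1 : c (n + 1) = p n := by rw [hcr (n + 1) le_rfl, hrS n]
  have hcn : c n = p (n - 1) := by
    rw [hcr n (by omega)]
    show (if n = 0 then q 1 else p (n - 1)) = p (n - 1)
    rw [if_neg (by omega)]
  have hs0 : s 0 = t 0 := by
    show c (n + 1 + 0) = q (n - 0)
    rw [hcn1]
    simp [hn]
  have hsn : s (n - 1) = t (n - 1) := by
    show c (n + 1 + (n - 1)) = q (n - (n - 1))
    have e1 : n + 1 + (n - 1) = 0 + 2 * n := by omega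
    have e2 : n - (n - 1) = 1 := by omega
    rw [e1, e2, hc.2.2 0, hcr 0 (by omega), hr0]
  obtain ⟨-, hall⟩ := Γ.vp2 (n - 1) (by omega) le_rfl t (n - 1) s ht le_rfl hs hs0 hsn
  have hs1 : c (n + 2) = q (n - 1) := by
    have := hall 1 (by omega)
    rw [hs_def, ht_def] at this
    simpa using this
  have := hc.2.1 n
  rw [hcn1, hcn, show n + 2 = n + 2 from rfl, hs1] at this
  exact this

/-- If `(x_0,...,x_n)` and `(y_0,...,y_n)` are two roots with `x_0 = y_0` and
`x_n = y_n`, then `x_1` and `y_1` are opposite at `x_0` iff `x_{n-1}` and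
`y_{n-1}` are opposite at `x_n`. -/
theorem stmt4 {V : Type*} {n : ℕ} (Γ : VeldkampNGon V n) (p q : ℕ → V)
    (hp : Γ.IsStraight n p) (hq : Γ.IsStraight n q)
    (h0 : q 0 = p 0) (hn : q n = p n) :
    Γ.opp (p 0) (p 1) (q 1) ↔ Γ.opp (p n) (p (n - 1)) (q (n - 1)) := by
  have hn2 : 2 ≤ n := Γ.two_le
  constructor
  · exact stmt4_aux Γ p q hp hq h0 hn
  · intro h
    have h' := stmt4_aux Γ (fun i => p (n - i)) (fun i => q (n - i))
      (straight_rev Γ.toVeldkampGraph hp) (straight_rev Γ.toVeldkampGraph hq)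
      (by simpa using hn) (by simpa using h0) (by simpa [hn] using h)
    have e1 : n - n = 0 := by omega
    have e2 : n - (n - 1) = 1 := by omega
    simp only [e1, e2] at h'
    exact h'
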